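/- Fix positive integers k, T, W, d, n with T ≥ W·d and W ≥ k·n, set U = n, and fix reals ε, δ, α ≥ 0, β ∈ [0,1]. If there exists an (ε,δ)-DP algorithm (under item-level neighbors) for fixed-window freq≥k with window W in the singleton setting on datasets with time horizon T over universe [U] having (α,β)-utility, then there exists an (ε,δ)-DP algorithm for the 1-way marginal problem of dimension d on inputs of at most n vectors having (α,β)-utility. -/

import Mathlib

open Finset

/-- `(ε, δ)`-differential privacy of a randomized algorithm `M`
with respect to the neighboring relation `neighbor`. -/
def IsDP {I O : Type} (neighbor : I → I → Prop) (M : I → PMF O) (ε δ : ℝ) : Prop :=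
  ∀ D D', neighbor D D' → ∀ s : Set O,
    (M D).toOuterMeasure s ≤
      ENNReal.ofReal (Real.exp ε) * (M D').toOuterMeasure s + ENNReal.ofReal δ

/-- `(α, β)`-utility: for every input and every query, with probability at least
`1 - β` the output estimate is within `α` of the true value. -/
def HasUtility {I Q : Type} (M : I → PMF (Q → ℝ)) (val : I → Q → ℝ) (α β : ℝ) : Prop :=
  ∀ D q, ENNReal.ofReal (1 - β) ≤ (M D).toOuterMeasure {o | |o q - val D q| ≤ α}

/-- A dataset with time horizon `T` over universe `[U]`:
`S t u` is the multiplicity of item `u` at (0-indexed) time step `t`. -/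
abbrev Dataset (T U : ℕ) : Type := Fin T → Fin U → ℕ

/-- `S^{[t₁, t₂]}_u` with 1-indexed times: total multiplicity of item `u`
during time steps `t₁, ..., t₂`. -/
def winCount {T U : ℕ} (S : Dataset T U) (t₁ t₂ : ℕ) (u : Fin U) : ℕ :=
  ∑ t : Fin T, if t₁ ≤ (t : ℕ) + 1 ∧ (t : ℕ) + 1 ≤ t₂ then S t u else 0

/-- `freq≥k(S^{[t₁,t₂]})`: the number of items occurring at least `k` times. -/
def freqGe {T U : ℕ} (k : ℕ) (S : Dataset T U) (t₁ t₂ : ℕ) : ℕ :=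
  (Finset.univ.filter fun u : Fin U => k ≤ winCount S t₁ t₂ u).card

/-- `freq=k(S^{[t₁,t₂]})`: the number of items occurring exactly `k` times. -/
def freqEq {T U : ℕ} (k : ℕ) (S : Dataset T U) (t₁ t₂ : ℕ) : ℕ :=
  (Finset.univ.filter fun u : Fin U => winCount S t₁ t₂ u = k).card

/-- Item-level neighbors: the datasets agree on all items except possibly one. -/
def ItemNeighbor {T U : ℕ} (S S' : Dataset T U) : Prop :=
  ∃ u : Fin U, ∀ u' : Fin U, u' ≠ u → ∀ t : Fin T, S t u' = S' t u'

/-- Event-level neighbors: the total (absolute) difference of multiplicities is at most 1. -/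
def EventNeighbor {T U : ℕ} (S S' : Dataset T U) : Prop :=
  (∑ t : Fin T, ∑ u : Fin U, ((S t u : ℤ) - (S' t u : ℤ)).natAbs) ≤ 1

/-- Singleton setting: at most one item arrives at each time step. -/
def IsSingleton {T U : ℕ} (S : Dataset T U) : Prop :=
  ∀ t : Fin T, (∑ u : Fin U, S t u) ≤ 1

/-- Cumulative `freq≥k` queries: the query indexed by `t : Fin T` is
`freq≥k(S^{[1, t+1]})`. -/
def cumVal (k : ℕ) {T U : ℕ} (S : Dataset T U) (t : Fin T) : ℝ :=
  (freqGe k S 1 ((t : ℕ) + 1) : ℝ)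

/-- Time-window `freq≥k` queries: the query indexed by a pair `t₁ ≤ t₂` (0-indexed)
is `freq≥k(S^{[t₁+1, t₂+1]})`. -/
def twVal (k : ℕ) {T U : ℕ} (S : Dataset T U)
    (p : {p : Fin T × Fin T // p.1 ≤ p.2}) : ℝ :=
  (freqGe k S ((p.1.1 : ℕ) + 1) ((p.1.2 : ℕ) + 1) : ℝ)

/-- Time-window `freq=k` queries. -/
def twValEq (k : ℕ) {T U : ℕ} (S : Dataset T U)
    (p : {p : Fin T × Fin T // p.1 ≤ p.2}) : ℝ :=
  (freqEq k S ((p.1.1 : ℕ) + 1) ((p.1.2 : ℕ) + 1) : ℝ)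

/-- Fixed-window `freq≥k` queries with window `W`: the query indexed by
`i : Fin (T - W + 1)` is `freq≥k(S^{[i+1, i+W]})`. -/
def fwVal (k W : ℕ) {T U : ℕ} (S : Dataset T U) (i : Fin (T - W + 1)) : ℝ :=
  (freqGe k S ((i : ℕ) + 1) ((i : ℕ) + W) : ℝ)

/-- Neighboring inputs for range-query-type problems: they differ by adding
or removing a single point. -/
def AddRemoveNeighbor {P : Type} (D D' : Multiset P) : Prop :=
  ∃ x : P, D' = x ::ₘ D ∨ D = x ::ₘ D'

/-- 1d-range queries over a linearly ordered finite domain `Fin M`: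
the query indexed by `y₁ ≤ y₂` counts the points in `[y₁, y₂]`. -/
def range1Val {M : ℕ} (D : Multiset (Fin M))
    (p : {p : Fin M × Fin M // p.1 ≤ p.2}) : ℝ :=
  ((D.filter fun x => p.1.1 ≤ x ∧ x ≤ p.1.2).card : ℝ)

/-- 2d-range queries over the domain `Fin M × Fin M`: the query indexed by a pair
`(y¹, y²)` counts the points `x` with `y¹ ⪯ x ⪯ y²` coordinatewise. -/
def range2Val {M : ℕ} (D : Multiset (Fin M × Fin M))
    (p : (Fin M × Fin M) × (Fin M × Fin M)) : ℝ :=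
  ((D.filter fun x =>
      p.1.1 ≤ x.1 ∧ p.1.2 ≤ x.2 ∧ x.1 ≤ p.2.1 ∧ x.2 ≤ p.2.2).card : ℝ)

/-- Neighboring inputs for the linear query problem: they differ
in a single coordinate. -/
def CoordNeighbor {m : ℕ} (x x' : Fin m → Bool) : Prop :=
  ∃ u : Fin m, ∀ u' : Fin m, u' ≠ u → x u' = x' u'

/-- The `A`-linear queries: the query indexed by `i : Fin d` is `(A x)_i`. -/
def linVal {d m : ℕ} (A : Fin d → Fin m → Bool) (x : Fin m → Bool) (i : Fin d) : ℝ :=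
  ((∑ u : Fin m, if A i u && x u then 1 else 0 : ℕ) : ℝ)

/-- The 1-way marginal queries: the query indexed by `i : Fin d` is the `i`-th
coordinate of the sum of the input vectors. -/
def margVal {d : ℕ} (D : Multiset (Fin d → Bool)) (i : Fin d) : ℝ :=
  (((D.map fun x => if x i then (1 : ℕ) else 0).sum : ℕ) : ℝ)

/-! ### Auxiliary material for the reduction -/

/-- Test the `i`-th coordinate of an optional vector (absent vectors give `false`). -/
def optTest {d : ℕ} (o : Option (Fin d → Bool)) (i : Fin d) : Bool :=
  o.elim false fun x => x i

@[simp] lemma optTest_some {d : ℕ} (x : Fin d → Bool) (i : Fin d) :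
    optTest (some x) i = x i := rfl

@[simp] lemma optTest_none {d : ℕ} (i : Fin d) :
    optTest (none : Option (Fin d → Bool)) i = false := rfl

/-- Encoding of an assignment of optional vectors to items into a dataset:
item `u` arrives during (0-indexed) times `i*W + u*k, …, i*W + u*k + k - 1`
iff its vector has a `1` in coordinate `i`. -/
def encFn (k W T d n : ℕ) (A : Fin n → Option (Fin d → Bool)) : Dataset T n :=
  fun t u =>
    if h : (t : ℕ) / W < d then
      (if (t : ℕ) % W / k = (u : ℕ) ∧ (t : ℕ) % W < k * n ∧
          optTest (A u) ⟨(t : ℕ) / W, h⟩ = true then 1 else 0)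
    else 0

lemma encFn_congr {k W T d n : ℕ} {A B : Fin n → Option (Fin d → Bool)}
    (u' : Fin n) (hAB : A u' = B u') (t : Fin T) :
    encFn k W T d n A t u' = encFn k W T d n B t u' := by
  unfold encFn
  rw [hAB]

lemma encFn_singleton {k W T d n : ℕ} (A : Fin n → Option (Fin d → Bool)) :
    IsSingleton (encFn k W T d n A) := by
  intro t
  calc ∑ u : Fin n, encFn k W T d n A t u
      ≤ ∑ u : Fin n, (if (t : ℕ) % W / k = (u : ℕ) then 1 else 0) := by
        apply Finset.sum_le_sum
        intro u _
        unfold encFn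
        by_cases h1 : (t : ℕ) / W < d
        · rw [dif_pos h1]
          by_cases h2 : (t : ℕ) % W / k = (u : ℕ) ∧ (t : ℕ) % W < k * n ∧
              optTest (A u) ⟨(t : ℕ) / W, h1⟩ = true
          · rw [if_pos h2, if_pos h2.1]
          · rw [if_neg h2]; exact Nat.zero_le _
        · rw [dif_neg h1]; exact Nat.zero_le _
    _ ≤ 1 := by
        rw [← Finset.card_filter]
        apply Finset.card_le_one.mpr
        intro a ha b hb
        simp only [Finset.mem_filter, Finset.mem_univ, true_and] at ha hb
        exact Fin.ext (by omega)

lemma idx_lt {W T d : ℕ} (hT : W * d ≤ T) (i : Fin d) : (i : ℕ) * W < T - W + 1 := by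
  have hiW : ((i : ℕ) + 1) * W ≤ d * W := Nat.mul_le_mul_right W i.isLt
  have exp2 : ((i : ℕ) + 1) * W = (i : ℕ) * W + W := by ring
  have hdW : d * W = W * d := Nat.mul_comm d W
  omega

lemma winCount_encFn {k W T d n : ℕ} (hk : 0 < k) (hWkn : k * n ≤ W) (hT : W * d ≤ T)
    (A : Fin n → Option (Fin d → Bool)) (i : Fin d) (u : Fin n) :
    winCount (encFn k W T d n A) ((i : ℕ) * W + 1) ((i : ℕ) * W + W) u
      = if optTest (A u) i = true then k else 0 := by
  have hbk : ((u : ℕ) + 1) * k ≤ n * k := Nat.mul_le_mul_right k u.isLt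
  have exp1 : ((u : ℕ) + 1) * k = (u : ℕ) * k + k := by ring
  have hnk : n * k = k * n := Nat.mul_comm n k
  have hku : k * (u : ℕ) = (u : ℕ) * k := Nat.mul_comm k u
  have hiW : ((i : ℕ) + 1) * W ≤ d * W := Nat.mul_le_mul_right W i.isLt
  have exp2 : ((i : ℕ) + 1) * W = (i : ℕ) * W + W := by ring
  have hdW : d * W = W * d := Nat.mul_comm d W
  unfold winCount
  have hterm : ∀ t : Fin T,
      (if (i : ℕ) * W + 1 ≤ (t : ℕ) + 1 ∧ (t : ℕ) + 1 ≤ (i : ℕ) * W + W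
        then encFn k W T d n A t u else 0)
      = (if ((i : ℕ) * W + (u : ℕ) * k ≤ (t : ℕ) ∧ (t : ℕ) < (i : ℕ) * W + (u : ℕ) * k + k)
          ∧ optTest (A u) i = true then 1 else 0) := by
    intro t
    by_cases hw : (i : ℕ) * W + 1 ≤ (t : ℕ) + 1 ∧ (t : ℕ) + 1 ≤ (i : ℕ) * W + W
    · rw [if_pos hw]
      obtain ⟨hw1, hw2⟩ := hw
      have hdiv : (t : ℕ) / W = (i : ℕ) := Nat.div_eq_of_lt_le (by omega) (by omega)
      have hmod : (t : ℕ) % W = (t : ℕ) - (i : ℕ) * W := by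
        have h0 := Nat.div_add_mod (t : ℕ) W
        rw [hdiv] at h0
        have hc : W * (i : ℕ) = (i : ℕ) * W := Nat.mul_comm _ _
        omega
      unfold encFn
      have hid : (t : ℕ) / W < d := by rw [hdiv]; exact i.isLt
      rw [dif_pos hid]
      have hfin : (⟨(t : ℕ) / W, hid⟩ : Fin d) = i := Fin.ext hdiv
      rw [hfin]
      refine if_congr ?_ rfl rfl
      constructor
      · rintro ⟨h1, h2, h3⟩
        have e1 := Nat.div_add_mod ((t : ℕ) % W) k
        rw [h1] at e1
        have e5 := Nat.mod_lt ((t : ℕ) % W) hk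
        exact ⟨⟨by omega, by omega⟩, h3⟩
      · rintro ⟨⟨h1, h2⟩, h3⟩
        refine ⟨?_, by omega, h3⟩
        rw [hmod]
        exact Nat.div_eq_of_lt_le (by omega) (by omega)
    · have hC : ¬(((i : ℕ) * W + (u : ℕ) * k ≤ (t : ℕ) ∧
          (t : ℕ) < (i : ℕ) * W + (u : ℕ) * k + k) ∧ optTest (A u) i = true) := by
        rintro ⟨⟨h1, h2⟩, -⟩
        exact hw ⟨by omega, by omega⟩
      rw [if_neg hw, if_neg hC]
  calc ∑ t : Fin T, (if (i : ℕ) * W + 1 ≤ (t : ℕ) + 1 ∧ (t : ℕ) + 1 ≤ (i : ℕ) * W + W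
        then encFn k W T d n A t u else 0)
      = ∑ t : Fin T, (if ((i : ℕ) * W + (u : ℕ) * k ≤ (t : ℕ) ∧
          (t : ℕ) < (i : ℕ) * W + (u : ℕ) * k + k) ∧ optTest (A u) i = true then 1 else 0) :=
        Finset.sum_congr rfl fun t _ => hterm t
    _ = if optTest (A u) i = true then k else 0 := by
        by_cases hP : optTest (A u) i = true
        · simp only [hP, eq_self_iff_true, and_true, if_true]
          have hak : (i : ℕ) * W + (u : ℕ) * k + k ≤ T := by omega
          rw [Fin.sum_univ_eq_sum_range (fun j => if (i : ℕ) * W + (u : ℕ) * k ≤ j ∧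
            j < (i : ℕ) * W + (u : ℕ) * k + k then (1 : ℕ) else 0) T]
          have hsub : Finset.Ico ((i : ℕ) * W + (u : ℕ) * k) ((i : ℕ) * W + (u : ℕ) * k + k)
              ⊆ Finset.range T := by
            intro j hj
            simp only [Finset.mem_Ico] at hj
            simp only [Finset.mem_range]
            omega
          rw [Finset.sum_congr rfl fun j _ => if_congr (Finset.mem_Ico).symm rfl rfl,
            Finset.sum_ite_mem, Finset.inter_eq_right.mpr hsub, Finset.sum_const,
            smul_eq_mul, mul_one, Nat.card_Ico]
          omega
        · simp [hP]

lemma freqGe_encFn {k W T d n : ℕ} (hk : 0 < k) (hWkn : k * n ≤ W) (hT : W * d ≤ T)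
    (A : Fin n → Option (Fin d → Bool)) (i : Fin d) :
    freqGe k (encFn k W T d n A) ((i : ℕ) * W + 1) ((i : ℕ) * W + W)
      = (Finset.univ.filter fun u : Fin n => optTest (A u) i = true).card := by
  unfold freqGe
  congr 1
  apply Finset.filter_congr
  intro u _
  rw [winCount_encFn hk hWkn hT A i u]
  constructor
  · intro hle
    by_contra hc
    rw [if_neg hc] at hle
    omega
  · intro h3
    rw [if_pos h3]

lemma fwVal_encFn {k W T d n : ℕ} (hk : 0 < k) (hWkn : k * n ≤ W) (hT : W * d ≤ T)
    (A : Fin n → Option (Fin d → Bool)) (i : Fin d) :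
    fwVal k W (encFn k W T d n A) ⟨(i : ℕ) * W, idx_lt hT i⟩
      = ((Finset.univ.filter fun u : Fin n => optTest (A u) i = true).card : ℝ) := by
  unfold fwVal
  exact congrArg _ (freqGe_encFn hk hWkn hT A i)

/-- Assigning the elements of a multiset to items via a permutation. -/
noncomputable def asgF (d n : ℕ) (D : Multiset (Fin d → Bool)) (π : Equiv.Perm (Fin n)) :
    Fin n → Option (Fin d → Bool) :=
  fun u => D.toList[((π u : Fin n) : ℕ)]?

lemma list_sum_eq {d : ℕ} (i : Fin d) (L : List (Fin d → Bool)) :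
    ∀ m : ℕ, L.length ≤ m →
      (∑ j ∈ Finset.range m, if optTest L[j]? i = true then (1 : ℕ) else 0)
        = (L.map fun x => if x i then (1 : ℕ) else 0).sum := by
  induction L with
  | nil =>
    intro m _
    simp
  | cons y L ih =>
    intro m hm
    cases m with
    | zero => simp at hm
    | succ m =>
      rw [Finset.sum_range_succ']
      simp only [List.getElem?_cons_succ, List.getElem?_cons_zero, optTest_some]
      rw [ih m (by simpa using hm)]
      simp only [List.map_cons, List.sum_cons]
      exact Nat.add_comm _ _

lemma margVal_eq {d n : ℕ} (i : Fin d) (D : Multiset (Fin d → Bool))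
    (hD : Multiset.card D ≤ n) (π : Equiv.Perm (Fin n)) :
    margVal D i
      = ((Finset.univ.filter fun u : Fin n => optTest (asgF d n D π u) i = true).card : ℝ) := by
  have hs : (Finset.univ.filter fun u : Fin n => optTest (asgF d n D π u) i = true).card
      = (D.toList.map fun x => if x i then (1 : ℕ) else 0).sum := by
    unfold asgF
    calc (Finset.univ.filter fun u : Fin n =>
            optTest (D.toList[((π u : Fin n) : ℕ)]?) i = true).card
        = ∑ u : Fin n, (if optTest (D.toList[((π u : Fin n) : ℕ)]?) i = true
            then (1 : ℕ) else 0) := Finset.card_filter _ _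
      _ = ∑ v : Fin n, (if optTest (D.toList[(v : ℕ)]?) i = true then (1 : ℕ) else 0) :=
          Fintype.sum_equiv π _ _ (fun _ => rfl)
      _ = ∑ j ∈ Finset.range n, (if optTest (D.toList[j]?) i = true then (1 : ℕ) else 0) :=
          Fin.sum_univ_eq_sum_range
            (fun j => if optTest (D.toList[j]?) i = true then (1 : ℕ) else 0) n
      _ = (D.toList.map fun x => if x i then (1 : ℕ) else 0).sum :=
          list_sum_eq i D.toList n (by rw [Multiset.length_toList]; exact hD)
  have hD2 : (D.map fun x => if x i then (1 : ℕ) else 0).sum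
      = (D.toList.map fun x => if x i then (1 : ℕ) else 0).sum := by
    conv_lhs => rw [← Multiset.coe_toList D, Multiset.map_coe, Multiset.sum_coe]
  unfold margVal
  exact congrArg _ (hD2.trans hs.symm)

lemma opad {X : Type} (L : List X) {n : ℕ} (h : L.length ≤ n) :
    List.ofFn (fun v : Fin n => L[(v : ℕ)]?)
      = L.map some ++ List.replicate (n - L.length) none := by
  apply List.ext_getElem
  · simp
    omega
  · intro j h₁ h₂
    rw [List.getElem_ofFn]
    by_cases hj : j < L.length
    · rw [List.getElem_append_left (by simpa using hj)]
      simp [List.getElem?_eq_getElem hj]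
    · rw [List.getElem_append_right (by simpa using hj)]
      simp [List.getElem?_eq_none (by omega : L.length ≤ j)]

lemma opad2 {X : Type} (L : List X) (x : X) {n : ℕ} (h : L.length < n) :
    List.ofFn (fun v : Fin n => if (v : ℕ) = L.length then some x else L[(v : ℕ)]?)
      = L.map some ++ some x :: List.replicate (n - (L.length + 1)) none := by
  have haux0 : ∀ (c ii : ℕ) (_ : ii < (some x :: List.replicate c (none : Option X)).length),
      ii = 0 → (some x :: List.replicate c (none : Option X))[ii] = some x := by
    intro c ii hii h0
    subst h0
    rfl
  have haux : ∀ (c ii : ℕ) (_ : ii < (some x :: List.replicate c (none : Option X)).length),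
      0 < ii → (some x :: List.replicate c (none : Option X))[ii] = none := by
    intro c ii hii h0
    match ii, h0, hii with
    | (m + 1), _, hii => simp
  apply List.ext_getElem
  · simp
    omega
  · intro j h₁ h₂
    rw [List.getElem_ofFn]
    show (if j = L.length then some x else L[j]?)
      = (L.map some ++ some x :: List.replicate (n - (L.length + 1)) none)[j]
    by_cases hj : j < L.length
    · rw [if_neg (by omega)]
      rw [List.getElem_append_left (by simpa using hj)]
      simp [List.getElem?_eq_getElem hj]
    · rw [List.getElem_append_right (by simp; omega)]
      by_cases hj2 : j = L.length
      · rw [if_pos hj2]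
        exact (haux0 _ _ (by simp at h₂ ⊢; omega) (by simp; omega)).symm
      · rw [if_neg hj2]
        rw [List.getElem?_eq_none (by omega : L.length ≤ j)]
        exact (haux _ _ (by simp at h₂ ⊢; omega) (by simp; omega)).symm

lemma exists_comp_perm {X : Type} [Fintype X] {n : ℕ} (f g : Fin n → X)
    (h : (List.ofFn f).Perm (List.ofFn g)) :
    ∃ σ : Equiv.Perm (Fin n), ∀ v, f v = g (σ v) := by
  letI : LinearOrder X := LinearOrder.lift' (fun o => ((Fintype.equivFin X) o : ℕ))
    (fun a b hab => (Fintype.equivFin X).injective (Fin.val_injective hab))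
  have h1 : f ∘ (Tuple.sort f) = g ∘ (Tuple.sort g) :=
    List.ofFn_injective (List.Perm.eq_of_sortedLE
      (Tuple.monotone_sort f).sortedLE_ofFn (Tuple.monotone_sort g).sortedLE_ofFn
      (((Tuple.sort f).ofFn_comp_perm f).trans (h.trans ((Tuple.sort g).ofFn_comp_perm g).symm)))
  refine ⟨(Tuple.sort f).symm.trans (Tuple.sort g), fun v => ?_⟩
  have h2 := congrFun h1 ((Tuple.sort f).symm v)
  simp only [Function.comp_apply, Equiv.apply_symm_apply] at h2
  exact h2

lemma key_coupling {d n : ℕ} (k W T : ℕ) (Dx Dy : Multiset (Fin d → Bool))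
    (x : Fin d → Bool) (hxy : Dy = x ::ₘ Dx) (hcard : Multiset.card Dy ≤ n) :
    ∃ e : Equiv.Perm (Fin n) ≃ Equiv.Perm (Fin n), ∀ π : Equiv.Perm (Fin n),
      ItemNeighbor (encFn k W T d n (asgF d n Dy (e π))) (encFn k W T d n (asgF d n Dx π)) ∧
      ItemNeighbor (encFn k W T d n (asgF d n Dx π)) (encFn k W T d n (asgF d n Dy (e π))) := by
  have hm : Dx.toList.length < n := by
    rw [Multiset.length_toList]
    have hcc : Multiset.card Dy = Multiset.card Dx + 1 := by rw [hxy, Multiset.card_cons]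
    omega
  have hlen' : Dy.toList.length = Dx.toList.length + 1 := by
    rw [Multiset.length_toList, Multiset.length_toList, hxy, Multiset.card_cons]
  have hp : Dy.toList.Perm (x :: Dx.toList) := by
    rw [← Multiset.coe_eq_coe, ← Multiset.cons_coe, Multiset.coe_toList, Multiset.coe_toList, hxy]
  have hperm : (List.ofFn (fun v : Fin n =>
        if (v : ℕ) = Dx.toList.length then some x else Dx.toList[(v : ℕ)]?)).Perm
      (List.ofFn (fun v : Fin n => Dy.toList[(v : ℕ)]?)) := by
    rw [opad2 Dx.toList x hm, opad Dy.toList (by omega), hlen']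
    exact List.perm_middle.trans (((hp.map some).append (List.Perm.refl _)).symm)
  obtain ⟨σ, hσ⟩ := exists_comp_perm _ _ hperm
  refine ⟨Equiv.mulLeft σ, fun π => ?_⟩
  have hAB : ∀ u' : Fin n, u' ≠ π⁻¹ ⟨Dx.toList.length, hm⟩ →
      asgF d n Dy (Equiv.mulLeft σ π) u' = asgF d n Dx π u' := by
    intro u' hu'
    have h1 : π u' ≠ ⟨Dx.toList.length, hm⟩ := by
      intro hc
      apply hu'
      rw [← hc, Equiv.Perm.inv_def, Equiv.symm_apply_apply]
    show Dy.toList[((σ (π u') : Fin n) : ℕ)]? = Dx.toList[((π u' : Fin n) : ℕ)]?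
    rw [← hσ (π u'), if_neg (fun hc => h1 (Fin.ext hc))]
  exact ⟨⟨π⁻¹ ⟨Dx.toList.length, hm⟩, fun u' hu' t => encFn_congr u' (hAB u' hu') t⟩,
    ⟨π⁻¹ ⟨Dx.toList.length, hm⟩, fun u' hu' t => (encFn_congr u' (hAB u' hu') t).symm⟩⟩

/-- with `T ≥ W·d`, `W ≥ k·n` and `U = n`, an item-level DP
algorithm for fixed-window `freq≥k` in the singleton setting yields a DP
algorithm for the 1-way marginal problem of dimension `d` on at most `n`
vectors. -/
theorem marginal_from_fixed_window_singleton (k T W d n : ℕ)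
    (hk : 0 < k) (hW : 0 < W) (hd : 0 < d) (hn : 0 < n)
    (hT : W * d ≤ T) (hWkn : k * n ≤ W)
    (ε δ α β : ℝ) (hε : 0 ≤ ε) (hδ : 0 ≤ δ) (hα : 0 ≤ α) (hβ0 : 0 ≤ β) (hβ1 : β ≤ 1)
    (h : ∃ M₁ : {S : Dataset T n // IsSingleton S} → PMF (Fin (T - W + 1) → ℝ),
      IsDP (fun S S' => ItemNeighbor S.1 S'.1) M₁ ε δ ∧
      HasUtility M₁ (fun S => fwVal k W S.1) α β) :
    ∃ M₂ : {D : Multiset (Fin d → Bool) // Multiset.card D ≤ n} → PMF (Fin d → ℝ),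
      IsDP (fun D D' => AddRemoveNeighbor D.1 D'.1) M₂ ε δ ∧
      HasUtility M₂ (fun D => margVal D.1) α β := by
  classical
  obtain ⟨M₁, hDP, hU⟩ := h
  haveI : Nonempty (Equiv.Perm (Fin n)) := ⟨1⟩
  have hone : ∑' (_ : Equiv.Perm (Fin n)),
      ((Fintype.card (Equiv.Perm (Fin n)) : ENNReal))⁻¹ = 1 := by
    have h0 := PMF.tsum_coe (PMF.uniformOfFintype (Equiv.Perm (Fin n)))
    simpa [PMF.uniformOfFintype_apply] using h0
  have hub : ∀ (F G : Equiv.Perm (Fin n) → ENNReal)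
      (e : Equiv.Perm (Fin n) ≃ Equiv.Perm (Fin n)),
      (∀ π, F π ≤ ENNReal.ofReal (Real.exp ε) * G (e π) + ENNReal.ofReal δ) →
      (∑' π, ((Fintype.card (Equiv.Perm (Fin n)) : ENNReal))⁻¹ * F π)
        ≤ ENNReal.ofReal (Real.exp ε) *
            (∑' π, ((Fintype.card (Equiv.Perm (Fin n)) : ENNReal))⁻¹ * G π)
          + ENNReal.ofReal δ := by
    intro F G e hFG
    calc ∑' π, ((Fintype.card (Equiv.Perm (Fin n)) : ENNReal))⁻¹ * F π
        ≤ ∑' π, ((Fintype.card (Equiv.Perm (Fin n)) : ENNReal))⁻¹ *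
            (ENNReal.ofReal (Real.exp ε) * G (e π) + ENNReal.ofReal δ) :=
          ENNReal.tsum_le_tsum fun π => mul_le_mul_right (hFG π) _
      _ = ∑' π, (ENNReal.ofReal (Real.exp ε) *
            (((Fintype.card (Equiv.Perm (Fin n)) : ENNReal))⁻¹ * G (e π))
            + ((Fintype.card (Equiv.Perm (Fin n)) : ENNReal))⁻¹ * ENNReal.ofReal δ) := by
          apply tsum_congr
          intro π
          ring
      _ = (∑' π, ENNReal.ofReal (Real.exp ε) *
            (((Fintype.card (Equiv.Perm (Fin n)) : ENNReal))⁻¹ * G (e π)))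
            + ∑' (_ : Equiv.Perm (Fin n)),
              ((Fintype.card (Equiv.Perm (Fin n)) : ENNReal))⁻¹ * ENNReal.ofReal δ :=
          ENNReal.tsum_add
      _ = ENNReal.ofReal (Real.exp ε) *
            (∑' π, ((Fintype.card (Equiv.Perm (Fin n)) : ENNReal))⁻¹ * G (e π))
            + (∑' (_ : Equiv.Perm (Fin n)),
                ((Fintype.card (Equiv.Perm (Fin n)) : ENNReal))⁻¹) * ENNReal.ofReal δ := by
          rw [ENNReal.tsum_mul_left, ENNReal.tsum_mul_right]
      _ = ENNReal.ofReal (Real.exp ε) *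
            (∑' π, ((Fintype.card (Equiv.Perm (Fin n)) : ENNReal))⁻¹ * G π)
            + ENNReal.ofReal δ := by
          rw [hone, one_mul]
          exact congrArg (fun z => ENNReal.ofReal (Real.exp ε) * z + ENNReal.ofReal δ)
            (Equiv.tsum_eq e fun ρ =>
              ((Fintype.card (Equiv.Perm (Fin n)) : ENNReal))⁻¹ * G ρ)
  refine ⟨fun D => (PMF.uniformOfFintype (Equiv.Perm (Fin n))).bind fun π =>
      PMF.map (fun (o : Fin (T - W + 1) → ℝ) (i : Fin d) => o ⟨(i : ℕ) * W, idx_lt hT i⟩)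
        (M₁ ⟨encFn k W T d n (asgF d n D.1 π), encFn_singleton _⟩), ?_, ?_⟩
  · intro D D' hnb s
    simp only [PMF.toOuterMeasure_bind_apply, PMF.toOuterMeasure_map_apply,
      PMF.uniformOfFintype_apply]
    obtain ⟨x, hx | hx⟩ := hnb
    · obtain ⟨e, he⟩ := key_coupling k W T D.1 D'.1 x hx D'.2
      exact hub
        (fun π => (M₁ ⟨encFn k W T d n (asgF d n D.1 π), encFn_singleton _⟩).toOuterMeasure
          ((fun (o : Fin (T - W + 1) → ℝ) (i : Fin d) => o ⟨(i : ℕ) * W, idx_lt hT i⟩) ⁻¹' s))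
        (fun π => (M₁ ⟨encFn k W T d n (asgF d n D'.1 π), encFn_singleton _⟩).toOuterMeasure
          ((fun (o : Fin (T - W + 1) → ℝ) (i : Fin d) => o ⟨(i : ℕ) * W, idx_lt hT i⟩) ⁻¹' s))
        e
        (fun π => hDP ⟨encFn k W T d n (asgF d n D.1 π), encFn_singleton _⟩
          ⟨encFn k W T d n (asgF d n D'.1 (e π)), encFn_singleton _⟩ (he π).2 _)
    · obtain ⟨e, he⟩ := key_coupling k W T D'.1 D.1 x hx D.2
      refine hub
        (fun π => (M₁ ⟨encFn k W T d n (asgF d n D.1 π), encFn_singleton _⟩).toOuterMeasure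
          ((fun (o : Fin (T - W + 1) → ℝ) (i : Fin d) => o ⟨(i : ℕ) * W, idx_lt hT i⟩) ⁻¹' s))
        (fun π => (M₁ ⟨encFn k W T d n (asgF d n D'.1 π), encFn_singleton _⟩).toOuterMeasure
          ((fun (o : Fin (T - W + 1) → ℝ) (i : Fin d) => o ⟨(i : ℕ) * W, idx_lt hT i⟩) ⁻¹' s))
        e.symm (fun π => ?_)
      have h1 := (he (e.symm π)).1
      rw [Equiv.apply_symm_apply] at h1
      exact hDP ⟨encFn k W T d n (asgF d n D.1 π), encFn_singleton _⟩
        ⟨encFn k W T d n (asgF d n D'.1 (e.symm π)), encFn_singleton _⟩ h1 _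
  · intro D i
    simp only [PMF.toOuterMeasure_bind_apply, PMF.toOuterMeasure_map_apply,
      PMF.uniformOfFintype_apply]
    have hper : ∀ π : Equiv.Perm (Fin n),
        ENNReal.ofReal (1 - β) ≤
          (M₁ ⟨encFn k W T d n (asgF d n D.1 π), encFn_singleton _⟩).toOuterMeasure
            ((fun (o : Fin (T - W + 1) → ℝ) (i : Fin d) => o ⟨(i : ℕ) * W, idx_lt hT i⟩) ⁻¹'
              {o | |o i - margVal D.1 i| ≤ α}) := by
      intro π
      have h2 : fwVal k W (encFn k W T d n (asgF d n D.1 π)) ⟨(i : ℕ) * W, idx_lt hT i⟩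
          = margVal D.1 i :=
        (fwVal_encFn hk hWkn hT _ i).trans (margVal_eq i D.1 D.2 π).symm
      have hset : ((fun (o : Fin (T - W + 1) → ℝ) (i : Fin d) =>
            o ⟨(i : ℕ) * W, idx_lt hT i⟩) ⁻¹' {o | |o i - margVal D.1 i| ≤ α})
          = {o : Fin (T - W + 1) → ℝ |
              |o ⟨(i : ℕ) * W, idx_lt hT i⟩ -
                fwVal k W (encFn k W T d n (asgF d n D.1 π))
                  ⟨(i : ℕ) * W, idx_lt hT i⟩| ≤ α} := by
        rw [h2]
        rfl
      rw [hset]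
      exact hU ⟨encFn k W T d n (asgF d n D.1 π), encFn_singleton _⟩
        ⟨(i : ℕ) * W, idx_lt hT i⟩
    calc ENNReal.ofReal (1 - β)
        = (∑' (_ : Equiv.Perm (Fin n)), ((Fintype.card (Equiv.Perm (Fin n)) : ENNReal))⁻¹)
            * ENNReal.ofReal (1 - β) := by rw [hone, one_mul]
      _ = ∑' (_ : Equiv.Perm (Fin n)),
            ((Fintype.card (Equiv.Perm (Fin n)) : ENNReal))⁻¹ * ENNReal.ofReal (1 - β) :=
          ENNReal.tsum_mul_right.symm
      _ ≤ _ := ENNReal.tsum_le_tsum fun π => mul_le_mul_right (hper π) _
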